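/- Let 0 ≤ d ≤ n be integers, let ρ : ℤⁿ → ℤ^d be a surjective group homomorphism, let K := ker ρ, and let c₁, …, c_{n−d} be any ℤ-basis of K. Let A be the d×d integer matrix whose j-th column is ρ(e_j) for j = 1, …, d (where e₁, …, e_n is the standard basis of ℤⁿ), and let B be the (n−d)×(n−d) integer matrix with entries B_{j,m} := (c_m)_{d+j}, the (d+j)-th coordinate of c_m, for j, m = 1, …, n−d. Then det A = det B or det A = −det B (the two determinants agree up to sign). -/

import Mathlib

/-- Gale duality spots determinants: given a surjection `ρ : ℤⁿ → ℤ^d` with kernel `K`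
and a `ℤ`-basis `b` of `K`, the determinant of the `d×d` matrix whose columns are the
images `ρ(e_j)` of the first `d` standard basis vectors agrees up to sign with the
determinant of the `(n-d)×(n-d)` matrix of the last `n-d` coordinates of the basis
vectors of `K`. -/
theorem statement7 {n d : ℕ} (h : d ≤ n)
    (ρ : (Fin n → ℤ) →ₗ[ℤ] (Fin d → ℤ)) (hρ : Function.Surjective ρ)
    (b : Module.Basis (Fin (n - d)) ℤ (LinearMap.ker ρ)) :
    (Matrix.of fun i j : Fin d => ρ (Pi.single (Fin.castLE h j) 1) i).det =
      (Matrix.of fun j m : Fin (n - d) =>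
        (b m : Fin n → ℤ) (Fin.cast (by omega) (Fin.natAdd d j))).det ∨
    (Matrix.of fun i j : Fin d => ρ (Pi.single (Fin.castLE h j) 1) i).det =
      -(Matrix.of fun j m : Fin (n - d) =>
        (b m : Fin n → ℤ) (Fin.cast (by omega) (Fin.natAdd d j))).det := by
  classical
  obtain ⟨σ, hσ⟩ := ρ.exists_rightInverse_of_surjective (LinearMap.range_eq_top.2 hρ)
  have hσ' : ∀ y, ρ (σ y) = y := fun y => congrFun (congrArg DFunLike.coe hσ) y
  -- the coordinate-splitting equivalence on indices
  have hnd : d + (n - d) = n := by omega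
  set e : Fin d ⊕ Fin (n - d) ≃ Fin n := finSumFinEquiv.trans (finCongr hnd) with he
  -- the kernel projection
  have hkmem : ∀ x : Fin n → ℤ, x - σ (ρ x) ∈ LinearMap.ker ρ := by
    intro x
    simp [LinearMap.mem_ker, map_sub, hσ']
  set k : (Fin n → ℤ) →ₗ[ℤ] LinearMap.ker ρ :=
    LinearMap.codRestrict (LinearMap.ker ρ) (LinearMap.id - σ ∘ₗ ρ) (fun x => hkmem x) with hk
  have hkval : ∀ x : Fin n → ℤ, (k x : Fin n → ℤ) = x - σ (ρ x) := by
    intro x; simp [hk, LinearMap.codRestrict]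
  set pair : (Fin n → ℤ) →ₗ[ℤ] (Fin d → ℤ) × (Fin (n - d) → ℤ) :=
    LinearMap.prod ρ (b.equivFun.toLinearMap ∘ₗ k) with hpair
  set inv : ((Fin d → ℤ) × (Fin (n - d) → ℤ)) →ₗ[ℤ] (Fin n → ℤ) :=
    σ ∘ₗ LinearMap.fst ℤ _ _ +
      ((LinearMap.ker ρ).subtype ∘ₗ b.equivFun.symm.toLinearMap) ∘ₗ LinearMap.snd ℤ _ _ with hinv
  have h1 : pair ∘ₗ inv = LinearMap.id := by
    apply LinearMap.ext
    rintro ⟨y, w⟩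
    have hval : inv (y, w) = σ y + ((b.equivFun.symm w : LinearMap.ker ρ) : Fin n → ℤ) := by
      simp [hinv]
    have hρval : ρ (inv (y, w)) = y := by
      rw [hval, map_add, hσ']
      have : ρ ((b.equivFun.symm w : LinearMap.ker ρ) : Fin n → ℤ) = 0 :=
        (LinearMap.mem_ker).1 (b.equivFun.symm w).2
      rw [this, add_zero]
    have hkval2 : k (inv (y, w)) = b.equivFun.symm w := by
      apply Subtype.ext
      rw [hkval, hρval, hval]
      abel
    have hpv : pair (inv (y, w)) = (ρ (inv (y, w)), b.equivFun (k (inv (y, w)))) := rfl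
    rw [LinearMap.comp_apply, hpv, hρval, hkval2, LinearEquiv.apply_symm_apply,
      LinearMap.id_apply]
  have h2 : inv ∘ₗ pair = LinearMap.id := by
    apply LinearMap.ext
    intro x
    have : inv (pair x) =
        σ (ρ x) + ((b.equivFun.symm (b.equivFun (k x)) : LinearMap.ker ρ) : Fin n → ℤ) := rfl
    rw [LinearMap.comp_apply, this, LinearEquiv.symm_apply_apply, hkval, LinearMap.id_apply]
    abel
  set L : ((Fin d → ℤ) × (Fin (n - d) → ℤ)) ≃ₗ[ℤ] (Fin n → ℤ) :=
    (LinearEquiv.sumArrowLequivProdArrow (Fin d) (Fin (n - d)) ℤ ℤ).symm.trans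
      (LinearEquiv.funCongrLeft ℤ ℤ e.symm) with hL
  set Φ : (Fin n → ℤ) ≃ₗ[ℤ] (Fin n → ℤ) :=
    ((LinearEquiv.ofLinear pair inv h1 h2 :
      (Fin n → ℤ) ≃ₗ[ℤ] ((Fin d → ℤ) × (Fin (n - d) → ℤ)))).trans L with hΦ
  -- evaluation of Φ
  have hΦval : ∀ (z : Fin n → ℤ) (s : Fin d ⊕ Fin (n - d)),
      Φ z (e s) = Sum.elim (ρ z) (b.equivFun (k z)) s := by
    intro z s
    show (LinearEquiv.funCongrLeft ℤ ℤ e.symm)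
      ((LinearEquiv.sumArrowLequivProdArrow (Fin d) (Fin (n - d)) ℤ ℤ).symm (pair z)) (e s) = _
    rw [LinearEquiv.funCongrLeft_apply, LinearMap.funLeft_apply, Equiv.symm_apply_apply]
    cases s with
    | inl i =>
      rw [show (pair z) = (ρ z, b.equivFun (k z)) from rfl,
        LinearEquiv.sumArrowLequivProdArrow_symm_apply_inl, Sum.elim_inl]
    | inr j =>
      rw [show (pair z) = (ρ z, b.equivFun (k z)) from rfl,
        LinearEquiv.sumArrowLequivProdArrow_symm_apply_inr, Sum.elim_inr]
  have hΦ1 : ∀ (z : Fin n → ℤ) (i : Fin d), Φ z (e (Sum.inl i)) = ρ z i := by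
    intro z i; rw [hΦval]; rfl
  have hΦ2 : ∀ (z : Fin n → ℤ) (j : Fin (n - d)),
      Φ z (e (Sum.inr j)) = b.equivFun (k z) j := by
    intro z j; rw [hΦval]; rfl
  set F : Matrix (Fin n) (Fin n) ℤ := LinearMap.toMatrix' (Φ : (Fin n → ℤ) →ₗ[ℤ] (Fin n → ℤ))
    with hF
  have hFapp : ∀ (z : Fin n → ℤ), F.mulVec z = Φ z := by
    intro z
    rw [hF, ← Matrix.toLin'_apply, Matrix.toLin'_toMatrix']
    rfl
  -- F is invertible
  have hFunit : IsUnit F.det := by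
    have : F * LinearMap.toMatrix' ((Φ.symm : (Fin n → ℤ) →ₗ[ℤ] (Fin n → ℤ))) = 1 := by
      rw [hF, ← LinearMap.toMatrix'_comp]
      simp
    exact IsUnit.of_mul_eq_one _ (by rw [← Matrix.det_mul, this, Matrix.det_one])
  -- the matrix P
  set A : Matrix (Fin d) (Fin d) ℤ :=
    Matrix.of fun i j : Fin d => ρ (Pi.single (Fin.castLE h j) 1) i with hA
  set B : Matrix (Fin (n - d)) (Fin (n - d)) ℤ :=
    Matrix.of fun j m : Fin (n - d) =>
      (b m : Fin n → ℤ) (Fin.cast hnd (Fin.natAdd d j)) with hB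
  set P : Matrix (Fin n) (Fin n) ℤ := Matrix.of fun i j =>
    Sum.elim (fun j' : Fin d => Pi.single (M := fun _ => ℤ) (Fin.castLE h j') 1 i)
      (fun m : Fin (n - d) => (b m : Fin n → ℤ) i) (e.symm j) with hP
  -- identities about e
  have he1 : ∀ i : Fin d, e (Sum.inl i) = Fin.castLE h i := by
    intro i
    apply Fin.ext
    simp [he, finSumFinEquiv]
  have he2 : ∀ j : Fin (n - d), e (Sum.inr j) = Fin.cast hnd (Fin.natAdd d j) := by
    intro j
    apply Fin.ext
    simp [he, finSumFinEquiv]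
  -- det P = det B
  have hdetP : P.det = B.det := by
    rw [← Matrix.det_submatrix_equiv_self e]
    have : P.submatrix e e = Matrix.fromBlocks 1 (Matrix.of fun i m =>
        (b m : Fin n → ℤ) (e (Sum.inl i))) 0 B := by
      ext x y
      cases x with
      | inl i =>
        cases y with
        | inl j =>
          simp only [Matrix.submatrix_apply, hP, Matrix.of_apply, Equiv.symm_apply_apply,
            Sum.elim_inl, Matrix.fromBlocks_apply₁₁]
          rw [he1]
          rcases eq_or_ne i j with rfl | hij
          · simp
          · rw [Matrix.one_apply_ne hij, Pi.single_eq_of_ne]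
            exact fun hc => hij (Fin.castLE_injective h hc)
        | inr m =>
          simp only [Matrix.submatrix_apply, hP, Matrix.of_apply, Equiv.symm_apply_apply,
            Sum.elim_inr, Matrix.fromBlocks_apply₁₂, Matrix.of_apply]
      | inr j =>
        cases y with
        | inl j' =>
          simp only [Matrix.submatrix_apply, hP, Matrix.of_apply, Equiv.symm_apply_apply,
            Sum.elim_inl, Matrix.fromBlocks_apply₂₁, Matrix.zero_apply]
          rw [he2]
          apply Pi.single_eq_of_ne
          intro hc
          have := congrArg Fin.val hc
          simp at this
          omega
        | inr m =>
          simp only [Matrix.submatrix_apply, hP, Matrix.of_apply, Equiv.symm_apply_apply,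
            Sum.elim_inr, Matrix.fromBlocks_apply₂₂, hB]
          rw [he2]
    rw [this, Matrix.det_fromBlocks_zero₂₁, Matrix.det_one, one_mul]
  -- det (F * P) = det A
  have hcol : ∀ x : Fin d ⊕ Fin (n - d), ∀ y,
      (F * P) y (e x) = Φ (Sum.elim (fun j' : Fin d => Pi.single (Fin.castLE h j') 1)
        (fun m : Fin (n - d) => (b m : Fin n → ℤ)) x) y := by
    intro x y
    rw [← hFapp]
    simp only [Matrix.mul_apply, Matrix.mulVec, dotProduct, hP, Matrix.of_apply]
    congr 1
    ext kk
    congr 1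
    rw [Equiv.symm_apply_apply]
    cases x <;> rfl
  have hdetFP : (F * P).det = A.det := by
    rw [← Matrix.det_submatrix_equiv_self e]
    have : (F * P).submatrix e e = Matrix.fromBlocks A 0 (Matrix.of fun j i =>
        (F * P) (e (Sum.inr j)) (e (Sum.inl i))) 1 := by
      ext x y
      cases x with
      | inl i =>
        cases y with
        | inl j =>
          simp only [Matrix.submatrix_apply, Matrix.fromBlocks_apply₁₁, hA, Matrix.of_apply]
          rw [hcol (Sum.inl j), hΦ1]
          rfl
        | inr m =>
          simp only [Matrix.submatrix_apply, Matrix.fromBlocks_apply₁₂, Matrix.zero_apply]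
          rw [hcol (Sum.inr m), hΦ1]
          have hz : ρ ((b m : Fin n → ℤ)) = 0 := (LinearMap.mem_ker).1 (b m).2
          show ρ ((b m : Fin n → ℤ)) i = 0
          rw [hz]
          rfl
      | inr j =>
        cases y with
        | inl i =>
          simp only [Matrix.submatrix_apply, Matrix.fromBlocks_apply₂₁, Matrix.of_apply]
        | inr m =>
          simp only [Matrix.submatrix_apply, Matrix.fromBlocks_apply₂₂]
          rw [hcol (Sum.inr m), hΦ2]
          show b.equivFun (k ((b m : Fin n → ℤ))) j = _
          have hkb : k ((b m : Fin n → ℤ)) = b m := by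
            apply Subtype.ext
            rw [hkval]
            have : ρ ((b m : Fin n → ℤ)) = 0 := (LinearMap.mem_ker).1 (b m).2
            rw [this, map_zero, sub_zero]
          rw [hkb]
          simp [Module.Basis.equivFun_apply, Matrix.one_apply, Finsupp.single_apply, eq_comm]
    rw [this, Matrix.det_fromBlocks_zero₁₂, Matrix.det_one, mul_one]
  -- conclude
  have key : F.det * B.det = A.det := by
    rw [← hdetP, ← Matrix.det_mul, hdetFP]
  rcases Int.isUnit_iff.1 hFunit with h1 | h1
  · left
    show A.det = B.det
    rw [← key, h1, one_mul]
  · right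
    show A.det = -B.det
    rw [← key, h1]
    ring
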